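/- There exists a twice continuously differentiable function u : [0,3/4] → ℝ satisfying u''(t) + t² · u(t)² · ln(1 + u(t)) = 0 for all t ∈ (0,3/4), u(0) = (1/10) u(1/4), u(3/4) = 20 ∫₀^{1/4} u(s) ds, and u(t) > 0 for all t ∈ (0,3/4). -/

import Mathlib

open Set Real MeasureTheory intervalIntegral

noncomputable section

def cl (x : ℝ) : ℝ := max 0 (min x 50)

def G (x : ℝ) : ℝ := (cl x)^2 * Real.log (1 + cl x)

lemma cl_nonneg (x : ℝ) : 0 ≤ cl x := le_max_left _ _
lemma cl_le_50 (x : ℝ) : cl x ≤ 50 := max_le (by norm_num) (min_le_right _ _)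
lemma cl_eq (x : ℝ) (h0 : 0 ≤ x) (h50 : x ≤ 50) : cl x = x := by
  unfold cl; rw [min_eq_left h50, max_eq_right h0]
lemma cl_mono : Monotone cl := fun _ _ h => max_le_max le_rfl (min_le_min h le_rfl)
lemma cl_le_self (x : ℝ) (h : 0 ≤ x) : cl x ≤ x := max_le h (min_le_left _ _)

lemma G_nonneg (x : ℝ) : 0 ≤ G x := by
  have h0 : 0 ≤ cl x := cl_nonneg x
  have h1 : 0 ≤ Real.log (1 + cl x) := Real.log_nonneg (by linarith)
  have h2 : (0:ℝ) ≤ (cl x)^2 := sq_nonneg _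
  unfold G; nlinarith

lemma hmono : MonotoneOn (fun y : ℝ => y^2 * Real.log (1+y)) (Ici 0) := by
  intro x hx y hy hxy
  simp only
  have h1 : Real.log (1+x) ≤ Real.log (1+y) := by
    apply Real.log_le_log (by simp at hx; linarith) (by linarith)
  have h0x : (0:ℝ) ≤ Real.log (1+x) := Real.log_nonneg (by simp at hx; linarith)
  have h2 : x^2 ≤ y^2 := by nlinarith [hx.out, hy.out]
  nlinarith

lemma G_eq (x : ℝ) (h0 : 0 ≤ x) (h50 : x ≤ 50) : G x = x^2 * Real.log (1+x) := by
  unfold G; rw [cl_eq x h0 h50]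

lemma G_mono : Monotone G := by
  intro x y h
  exact hmono (mem_Ici.2 (cl_nonneg x)) (mem_Ici.2 (cl_nonneg y)) (cl_mono h)

lemma exp_pow_ge (n : ℕ) : (2.7182818283:ℝ)^n ≤ Real.exp n := by
  have h := Real.exp_one_gt_d9
  rw [← Real.exp_one_rpow (n:ℝ), Real.rpow_natCast]
  exact pow_le_pow_left₀ (by norm_num) h.le n

lemma log51_le_4 : Real.log 51 ≤ 4 := by
  rw [show (4:ℝ) = ((4:ℕ):ℝ) by norm_num, ← Real.log_exp ((4:ℕ):ℝ)]
  apply Real.log_le_log (by norm_num)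
  calc (51:ℝ) ≤ (2.7182818283:ℝ)^(4:ℕ) := by norm_num
  _ ≤ Real.exp (4:ℕ) := exp_pow_ge 4

lemma log_le_27 {x : ℝ} (h0 : 0 < x) (h : x ≤ 14.7) : Real.log x ≤ 2.7 := by
  rw [← Real.log_exp 2.7]
  apply Real.log_le_log h0
  have h1 : Real.exp 2.7 = Real.exp 2 * Real.exp 0.7 := by
    rw [← Real.exp_add]; norm_num
  have h2 : (7.389:ℝ) ≤ Real.exp 2 := by
    calc (7.389:ℝ) ≤ (2.7182818283:ℝ)^(2:ℕ) := by norm_num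
    _ ≤ Real.exp (2:ℕ) := exp_pow_ge 2
    _ = Real.exp 2 := by norm_num
  have h3 : (2:ℝ) ≤ Real.exp 0.7 := by
    rw [show (2:ℝ) = Real.exp (Real.log 2) by rw [Real.exp_log]; norm_num]
    apply Real.exp_le_exp.2
    have := Real.log_two_lt_d9
    linarith
  calc x ≤ 14.7 := h
  _ ≤ 7.389 * 2 := by norm_num
  _ ≤ Real.exp 2 * Real.exp 0.7 := by nlinarith [Real.exp_pos 2, Real.exp_pos 0.7]
  _ = Real.exp 2.7 := h1.symm

lemma log_aux (x : ℝ) : Real.log (1 + cl x) ≤ 4 := by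
  rw [← Real.log_exp 4]
  apply Real.log_le_log (by linarith [cl_nonneg x])
  calc 1 + cl x ≤ 51 := by linarith [cl_le_50 x]
  _ ≤ (2.7182818283:ℝ)^(4:ℕ) := by norm_num
  _ ≤ Real.exp (4:ℕ) := exp_pow_ge 4
  _ = Real.exp 4 := by norm_num

lemma G_le_10000 (x : ℝ) : G x ≤ 10000 := by
  have h1 := log_aux x
  have h2 : (cl x)^2 ≤ 2500 := by nlinarith [cl_nonneg x, cl_le_50 x]
  have h3 : 0 ≤ Real.log (1 + cl x) := Real.log_nonneg (by linarith [cl_nonneg x])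
  have h4 : (0:ℝ) ≤ (cl x)^2 := sq_nonneg _
  unfold G; nlinarith

/-- For moderate x, a sharper bound `G x ≤ x² * 2.7`. -/
lemma G_le_sq {x : ℝ} (h : x ≤ 13.7) : G x ≤ (max 0 x)^2 * 2.7 := by
  have hc : cl x ≤ max 0 x := max_le_max le_rfl (min_le_left _ _)
  have hc0 := cl_nonneg x
  have h1 : Real.log (1 + cl x) ≤ 2.7 := by
    apply log_le_27 (by linarith)
    have : cl x ≤ 13.7 := le_trans hc (max_le (by norm_num) h)
    linarith
  have h3 : 0 ≤ Real.log (1 + cl x) := Real.log_nonneg (by linarith)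
  have h2 : (cl x)^2 ≤ (max 0 x)^2 := by nlinarith [le_max_left 0 x]
  unfold G; nlinarith [sq_nonneg (cl x)]

/-- `G x ≤ (max 0 x)^3`, via `log (1+y) ≤ y`. -/
lemma G_le_cube (x : ℝ) : G x ≤ (max 0 x)^3 := by
  have hc : cl x ≤ max 0 x := max_le_max le_rfl (min_le_left _ _)
  have hc0 := cl_nonneg x
  have h1 : Real.log (1 + cl x) ≤ cl x := by
    have h := Real.log_le_sub_one_of_pos (show (0:ℝ) < 1 + cl x by linarith)
    linarith
  have h3 : 0 ≤ Real.log (1 + cl x) := Real.log_nonneg (by linarith)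
  have h0m : (0:ℝ) ≤ max 0 x := le_max_left _ _
  calc G x = (cl x)^2 * Real.log (1 + cl x) := rfl
  _ ≤ (cl x)^2 * cl x := by nlinarith [sq_nonneg (cl x)]
  _ = (cl x)^3 := by ring
  _ ≤ (max 0 x)^3 := pow_le_pow_left₀ hc0 hc 3

lemma G_seven : (98:ℝ) ≤ G 7 := by
  have he : G 7 = 49 * Real.log 8 := by
    rw [G_eq 7 (by norm_num) (by norm_num)]; norm_num
  have h2 : (2:ℝ) ≤ Real.log 8 := by
    rw [← Real.log_exp 2]
    apply Real.log_le_log (Real.exp_pos 2)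
    have h := Real.exp_one_lt_d9
    have h4 : Real.exp (2:ℝ) = Real.exp 1 * Real.exp 1 := by
      rw [← Real.exp_add]; norm_num
    rw [h4]; nlinarith [Real.exp_pos 1]
  rw [he]; linarith

lemma cl_lip (x y : ℝ) : |cl x - cl y| ≤ |x - y| := by
  unfold cl
  calc |max 0 (min x 50) - max 0 (min y 50)| ≤ max |0 - (0:ℝ)| |min x 50 - min y 50| :=
      abs_max_sub_max_le_max 0 (min x 50) 0 (min y 50)
  _ = |min x 50 - min y 50| := by simp
  _ ≤ max |x - y| |(50:ℝ) - 50| := abs_min_sub_min_le_max x 50 y 50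
  _ = |x - y| := by simp

lemma cl_cont : Continuous cl :=
  continuous_const.max (continuous_id.min continuous_const)

lemma G_cont : Continuous G := by
  apply Continuous.mul ((cl_cont.pow 2))
  apply Real.continuousOn_log.comp_continuous (continuous_const.add cl_cont)
  intro x
  have h1 : (0:ℝ) < 1 + cl x := by linarith [cl_nonneg x]
  simp [ne_of_gt h1]

lemma hfun_lip : LipschitzOnWith 500 (fun y : ℝ => y^2 * Real.log (1+y)) (Icc 0 50) := by
  apply Convex.lipschitzOnWith_of_nnnorm_hasDerivWithin_le
    (f' := fun y => 2*y*Real.log (1+y) + y^2 * (1/(1+y))) (convex_Icc 0 50)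
  · intro y hy
    obtain ⟨hy0, hy50⟩ := hy
    have hne : (1:ℝ) + y ≠ 0 := by linarith
    have h1 : HasDerivAt (fun y : ℝ => y^2) (2*y) y := by
      simpa using hasDerivAt_pow 2 y
    have h2 : HasDerivAt (fun y : ℝ => Real.log (1+y)) (1/(1+y)) y := by
      have ha : HasDerivAt (fun y : ℝ => 1 + y) 1 y := by
        simpa using (hasDerivAt_id y).const_add 1
      have := (Real.hasDerivAt_log hne).comp y ha
      simpa [one_div, Function.comp_def] using this
    exact (h1.mul h2).hasDerivWithinAt
  · intro y hy
    obtain ⟨hy0, hy50⟩ := hy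
    have hlog0 : 0 ≤ Real.log (1+y) := Real.log_nonneg (by linarith)
    have hlog4 : Real.log (1+y) ≤ 4 := by
      rw [← Real.log_exp 4]
      apply Real.log_le_log (by linarith)
      calc 1 + y ≤ 51 := by linarith
      _ ≤ (2.7182818283:ℝ)^(4:ℕ) := by norm_num
      _ ≤ Real.exp (4:ℕ) := exp_pow_ge 4
      _ = Real.exp 4 := by norm_num
    have hfrac : y^2 * (1/(1+y)) ≤ y := by
      rw [mul_one_div, div_le_iff₀ (by linarith : (0:ℝ) < 1+y)]
      nlinarith
    have hfrac0 : 0 ≤ y^2 * (1/(1+y)) := by positivity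
    rw [← NNReal.coe_le_coe, coe_nnnorm, Real.norm_eq_abs, abs_le]
    constructor
    · push_cast; nlinarith
    · push_cast; nlinarith

lemma G_lip (x y : ℝ) : |G x - G y| ≤ 500 * |x - y| := by
  have h1 := hfun_lip.dist_le_mul (cl x) ⟨cl_nonneg x, cl_le_50 x⟩ (cl y) ⟨cl_nonneg y, cl_le_50 y⟩
  simp only [Real.dist_eq, NNReal.coe_ofNat] at h1
  calc |G x - G y| ≤ 500 * |cl x - cl y| := h1
  _ ≤ 500 * |x - y| := by linarith [cl_lip x y, abs_nonneg (x-y)]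


/-! ### The vector field and Picard–Lindelöf -/

/-- clamped time -/
def sg (t : ℝ) : ℝ := max 0 (min t (3/4))

lemma sg_mem (t : ℝ) (h : t ∈ Icc (0:ℝ) (3/4)) : sg t = t := by
  unfold sg; rw [min_eq_left h.2, max_eq_right h.1]

lemma sg_nonneg (t : ℝ) : 0 ≤ sg t := le_max_left _ _
lemma sg_le (t : ℝ) : sg t ≤ 3/4 := max_le (by norm_num) (min_le_right _ _)
lemma sg_cont : Continuous sg := continuous_const.max (continuous_id.min continuous_const)

/-- the first-order field on ℝ × ℝ -/
def F (t : ℝ) (p : ℝ × ℝ) : ℝ × ℝ := (p.2, -((sg t)^2 * G p.1))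

lemma F_lip (t : ℝ) : LipschitzWith 500 (F t) := by
  apply LipschitzWith.of_dist_le_mul
  intro p q
  rw [Prod.dist_eq, Prod.dist_eq]
  have hd1 : dist p.1 q.1 ≤ max (dist p.1 q.1) (dist p.2 q.2) := le_max_left _ _
  have hd2 : dist p.2 q.2 ≤ max (dist p.1 q.1) (dist p.2 q.2) := le_max_right _ _
  have hG := G_lip p.1 q.1
  have hsg0 := sg_nonneg t
  have hsg1 := sg_le t
  have h2 : dist (-((sg t)^2 * G p.1)) (-((sg t)^2 * G q.1)) ≤ 500 * max (dist p.1 q.1) (dist p.2 q.2) := by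
    rw [Real.dist_eq]
    have : -((sg t)^2 * G p.1) - -((sg t)^2 * G q.1) = (sg t)^2 * (G q.1 - G p.1) := by ring
    rw [this, abs_mul, abs_of_nonneg (sq_nonneg (sg t))]
    have h3 : |G q.1 - G p.1| ≤ 500 * |q.1 - p.1| := G_lip q.1 p.1
    have h4 : (sg t)^2 ≤ 1 := by nlinarith
    have h5 : |q.1 - p.1| = dist p.1 q.1 := by rw [Real.dist_eq, abs_sub_comm]
    nlinarith [abs_nonneg (q.1 - p.1), sq_nonneg (sg t), abs_nonneg (G q.1 - G p.1),
      dist_nonneg.trans hd1]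
  have h1 : dist p.2 q.2 ≤ 500 * max (dist p.1 q.1) (dist p.2 q.2) := by
    have h0 : (0:ℝ) ≤ max (dist p.1 q.1) (dist p.2 q.2) := le_trans dist_nonneg hd2
    nlinarith
  simp only [F]
  push_cast
  exact max_le h1 h2

lemma F_sol_exists (a b : ℝ) : ∃ z : ℝ → ℝ × ℝ, z 0 = (a, b) ∧
    ∀ t ∈ Icc (0:ℝ) (3/4), HasDerivWithinAt z (F t (z t)) (Icc 0 (3/4)) t := by
  set x₀ : ℝ × ℝ := (a, b) with hx₀
  have hpl : IsPicardLindelof F (tmin := 0) (tmax := 3/4) ⟨0, by norm_num⟩ x₀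
      (3*‖x₀‖₊ + 16875) 0 (4*‖x₀‖₊ + 22500) 500 := by
    constructor
    · intro t _
      exact (F_lip t).lipschitzOnWith
    · intro x _
      apply Continuous.continuousOn
      exact continuous_const.prodMk (((sg_cont.pow 2).mul continuous_const).neg)
    · intro t _ x hx
      push_cast at hx ⊢
      have hxn : ‖x‖ ≤ ‖x₀‖ + (3*‖x₀‖ + 16875) := by
        have := mem_closedBall_iff_norm.mp hx
        have h2 : ‖x‖ - ‖x₀‖ ≤ ‖x - x₀‖ := norm_sub_norm_le x x₀
        linarith
      rw [Prod.norm_def]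
      apply max_le
      · have : ‖x.2‖ ≤ ‖x‖ := norm_snd_le x
        simp only [F]
        calc ‖x.2‖ ≤ ‖x‖ := norm_snd_le x
        _ ≤ 4*‖x₀‖ + 16875 := by linarith
        _ ≤ 4*‖x₀‖ + 22500 := by linarith
      · simp only [F]
        have hG0 := G_nonneg x.1
        have hG1 := G_le_10000 x.1
        have hs0 := sg_nonneg t
        have hs1 := sg_le t
        rw [norm_neg, Real.norm_eq_abs, abs_of_nonneg (by positivity)]
        have h1 : (sg t)^2 * G x.1 ≤ 1 * 10000 := by nlinarith
        have h2 : (0:ℝ) ≤ ‖x₀‖ := norm_nonneg _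
        linarith
    · push_cast
      rw [show max (3/4 - 0 : ℝ) (0 - 0) = 3/4 by norm_num]
      ring_nf
      linarith [norm_nonneg x₀]
  obtain ⟨z, hz0, hz⟩ := hpl.exists_eq_forall_mem_Icc_hasDerivWithinAt₀
  exact ⟨z, hz0, hz⟩

/-! ### Trajectories -/

/-- `IsTraj a b u v`: `(u,v)` is a (globally continuous) solution of the truncated system
on `[0, 3/4]` with `u 0 = a`, `v 0 = b`. -/
def IsTraj (a b : ℝ) (u v : ℝ → ℝ) : Prop :=
  Continuous u ∧ Continuous v ∧ u 0 = a ∧ v 0 = b ∧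
  (∀ t ∈ Icc (0:ℝ) (3/4), HasDerivWithinAt u (v t) (Icc 0 (3/4)) t) ∧
  (∀ t ∈ Icc (0:ℝ) (3/4), HasDerivWithinAt v (-(t^2 * G (u t))) (Icc 0 (3/4)) t)

lemma traj_exists (a b : ℝ) : ∃ w : (ℝ → ℝ) × (ℝ → ℝ), IsTraj a b w.1 w.2 := by
  obtain ⟨z, hz0, hz⟩ := F_sol_exists a b
  have hzc : ContinuousOn z (Icc 0 (3/4)) :=
    fun t ht => (hz t ht).continuousWithinAt
  have hsgmem : ∀ t : ℝ, sg t ∈ Icc (0:ℝ) (3/4) := fun t => ⟨sg_nonneg t, sg_le t⟩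
  set u : ℝ → ℝ := fun t => (z (sg t)).1 with hu_def
  set v : ℝ → ℝ := fun t => (z (sg t)).2 with hv_def
  have hcu : Continuous u := (continuous_fst.comp_continuousOn hzc).comp_continuous sg_cont hsgmem
  have hcv : Continuous v := (continuous_snd.comp_continuousOn hzc).comp_continuous sg_cont hsgmem
  have hueq : ∀ t ∈ Icc (0:ℝ) (3/4), u t = (z t).1 := fun t ht => by
    simp only [hu_def, sg_mem t ht]
  have hveq : ∀ t ∈ Icc (0:ℝ) (3/4), v t = (z t).2 := fun t ht => by
    simp only [hv_def, sg_mem t ht]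
  refine ⟨(u, v), hcu, hcv, ?_, ?_, ?_, ?_⟩
  · show u 0 = a
    rw [hueq 0 (by constructor <;> norm_num), hz0]
  · show v 0 = b
    rw [hveq 0 (by constructor <;> norm_num), hz0]
  · intro t ht
    have h1 : HasDerivWithinAt (fun s => (z s).1) (F t (z t)).1 (Icc 0 (3/4)) t := by
      simpa using ((hz t ht).hasFDerivWithinAt.fst).hasDerivWithinAt
    have h2 : HasDerivWithinAt u (F t (z t)).1 (Icc 0 (3/4)) t :=
      h1.congr hueq (hueq t ht)
    have : (F t (z t)).1 = v t := by rw [hveq t ht]; rfl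
    rwa [this] at h2
  · intro t ht
    have h1 : HasDerivWithinAt (fun s => (z s).2) (F t (z t)).2 (Icc 0 (3/4)) t := by
      simpa using ((hz t ht).hasFDerivWithinAt.snd).hasDerivWithinAt
    have h2 : HasDerivWithinAt v (F t (z t)).2 (Icc 0 (3/4)) t :=
      h1.congr hveq (hveq t ht)
    have : (F t (z t)).2 = -(t^2 * G (u t)) := by
      simp only [F, sg_mem t ht]
      rw [hueq t ht]
    rwa [this] at h2


/-! ### Grönwall: continuous dependence and uniqueness -/

lemma traj_dist {a₁ b₁ a₂ b₂ : ℝ} {u₁ v₁ u₂ v₂ : ℝ → ℝ}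
    (h₁ : IsTraj a₁ b₁ u₁ v₁) (h₂ : IsTraj a₂ b₂ u₂ v₂) {t : ℝ}
    (ht : t ∈ Icc (0:ℝ) (3/4)) :
    |u₁ t - u₂ t| ≤ max |a₁ - a₂| |b₁ - b₂| * Real.exp (500 * t) ∧
    |v₁ t - v₂ t| ≤ max |a₁ - a₂| |b₁ - b₂| * Real.exp (500 * t) := by
  obtain ⟨cu₁, cv₁, hu01, hv01, hdu₁, hdv₁⟩ := h₁
  obtain ⟨cu₂, cv₂, hu02, hv02, hdu₂, hdv₂⟩ := h₂
  set f : ℝ → ℝ × ℝ := fun s => (u₁ s, v₁ s) with hf_def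
  set g : ℝ → ℝ × ℝ := fun s => (u₂ s, v₂ s) with hg_def
  have hf' : ∀ s ∈ Ico (0:ℝ) (3/4), HasDerivWithinAt f (F s (f s)) (Ici s) s := by
    intro s hs
    have hmem : s ∈ Icc (0:ℝ) (3/4) := ⟨hs.1, hs.2.le⟩
    have hd : HasDerivWithinAt f (v₁ s, -(s^2 * G (u₁ s))) (Icc 0 (3/4)) s :=
      (hdu₁ s hmem).prodMk (hdv₁ s hmem)
    have hval : F s (f s) = (v₁ s, -(s^2 * G (u₁ s))) := by
      simp only [F, hf_def, sg_mem s hmem]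
    rw [hval]
    exact hd.mono_of_mem_nhdsWithin (Icc_mem_nhdsGE_of_mem ⟨hs.1, hs.2⟩)
  have hg' : ∀ s ∈ Ico (0:ℝ) (3/4), HasDerivWithinAt g (F s (g s)) (Ici s) s := by
    intro s hs
    have hmem : s ∈ Icc (0:ℝ) (3/4) := ⟨hs.1, hs.2.le⟩
    have hd : HasDerivWithinAt g (v₂ s, -(s^2 * G (u₂ s))) (Icc 0 (3/4)) s :=
      (hdu₂ s hmem).prodMk (hdv₂ s hmem)
    have hval : F s (g s) = (v₂ s, -(s^2 * G (u₂ s))) := by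
      simp only [F, hg_def, sg_mem s hmem]
    rw [hval]
    exact hd.mono_of_mem_nhdsWithin (Icc_mem_nhdsGE_of_mem ⟨hs.1, hs.2⟩)
  have hcf : ContinuousOn f (Icc (0:ℝ) (3/4)) := ((cu₁.prodMk cv₁)).continuousOn
  have hcg : ContinuousOn g (Icc (0:ℝ) (3/4)) := ((cu₂.prodMk cv₂)).continuousOn
  have ha : dist (f 0) (g 0) ≤ max |a₁ - a₂| |b₁ - b₂| := by
    rw [Prod.dist_eq]
    simp only [hf_def, hg_def, hu01, hv01, hu02, hv02, Real.dist_eq]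
    exact le_rfl
  have key := dist_le_of_trajectories_ODE (v := F) (K := 500) F_lip hcf hf' hcg hg' ha t ht
  have h5 : dist (f t) (g t) ≤ max |a₁ - a₂| |b₁ - b₂| * Real.exp (500 * t) := by
    convert key using 3
    push_cast; ring_nf
  constructor
  · calc |u₁ t - u₂ t| = dist (f t).1 (g t).1 := by rw [Real.dist_eq]
    _ ≤ dist (f t) (g t) := by rw [Prod.dist_eq]; exact le_max_left _ _
    _ ≤ _ := h5
  · calc |v₁ t - v₂ t| = dist (f t).2 (g t).2 := by rw [Real.dist_eq]
    _ ≤ dist (f t) (g t) := by rw [Prod.dist_eq]; exact le_max_right _ _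
    _ ≤ _ := h5


lemma traj_unique {a b : ℝ} {u₁ v₁ u₂ v₂ : ℝ → ℝ}
    (h₁ : IsTraj a b u₁ v₁) (h₂ : IsTraj a b u₂ v₂) {t : ℝ}
    (ht : t ∈ Icc (0:ℝ) (3/4)) : u₁ t = u₂ t ∧ v₁ t = v₂ t := by
  have h := traj_dist h₁ h₂ ht
  simp only [sub_self, abs_zero, max_self, zero_mul] at h
  constructor
  · have := h.1; rwa [abs_nonpos_iff, sub_eq_zero] at this
  · have := h.2; rwa [abs_nonpos_iff, sub_eq_zero] at this

/-- the canonical trajectory -/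
def U (a b : ℝ) : ℝ → ℝ := (Classical.choose (traj_exists a b)).1
def V (a b : ℝ) : ℝ → ℝ := (Classical.choose (traj_exists a b)).2

lemma UV_traj (a b : ℝ) : IsTraj a b (U a b) (V a b) := Classical.choose_spec (traj_exists a b)

/-! ### Integral representations along a trajectory -/

lemma prim_hasDerivAt {q : ℝ → ℝ} (hq : Continuous q) (c s : ℝ) :
    HasDerivAt (fun x => ∫ r in c..x, q r) (q s) s :=
  (intervalIntegral.integral_hasStrictDerivAt_right (hq.intervalIntegrable c s)
    (hq.stronglyMeasurableAtFilter _ _) hq.continuousAt).hasDerivAt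

section TrajFacts

variable {a b : ℝ} {u v : ℝ → ℝ}

lemma traj_q_cont (h : IsTraj a b u v) : Continuous (fun s : ℝ => s^2 * G (u s)) :=
  (continuous_pow 2).mul (G_cont.comp h.1)

lemma traj_hasDerivAt_u (h : IsTraj a b u v) {x : ℝ} (hx : x ∈ Ioo (0:ℝ) (3/4)) :
    HasDerivAt u (v x) x := by
  have hxm : x ∈ Icc (0:ℝ) (3/4) := ⟨hx.1.le, hx.2.le⟩
  exact (h.2.2.2.2.1 x hxm).hasDerivAt (Icc_mem_nhds hx.1 hx.2)

lemma traj_hasDerivAt_v (h : IsTraj a b u v) {x : ℝ} (hx : x ∈ Ioo (0:ℝ) (3/4)) :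
    HasDerivAt v (-(x^2 * G (u x))) x := by
  have hxm : x ∈ Icc (0:ℝ) (3/4) := ⟨hx.1.le, hx.2.le⟩
  exact (h.2.2.2.2.2 x hxm).hasDerivAt (Icc_mem_nhds hx.1 hx.2)

/-- `u d - u c = ∫ v` -/
lemma traj_u_sub (h : IsTraj a b u v) {c d : ℝ} (hc : 0 ≤ c) (hcd : c ≤ d) (hd : d ≤ 3/4) :
    u d - u c = ∫ s in c..d, v s := by
  have hderiv : ∀ x ∈ Ioo c d, HasDerivAt u (v x) x := fun x hx =>
    traj_hasDerivAt_u h ⟨lt_of_le_of_lt hc hx.1, lt_of_lt_of_le hx.2 hd⟩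
  exact (intervalIntegral.integral_eq_sub_of_hasDerivAt_of_le hcd h.1.continuousOn hderiv
    (h.2.1.intervalIntegrable c d)).symm

/-- `v d - v c = -∫ q` -/
lemma traj_v_sub (h : IsTraj a b u v) {c d : ℝ} (hc : 0 ≤ c) (hcd : c ≤ d) (hd : d ≤ 3/4) :
    v d - v c = -∫ s in c..d, s^2 * G (u s) := by
  have hderiv : ∀ x ∈ Ioo c d, HasDerivAt v (-(x^2 * G (u x))) x := fun x hx =>
    traj_hasDerivAt_v h ⟨lt_of_le_of_lt hc hx.1, lt_of_lt_of_le hx.2 hd⟩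
  have := intervalIntegral.integral_eq_sub_of_hasDerivAt_of_le hcd h.2.1.continuousOn hderiv
    ((traj_q_cont h).neg.intervalIntegrable c d)
  rw [intervalIntegral.integral_neg] at this
  linarith [this]

/-- `v` is antitone on `[0,3/4]` -/
lemma traj_v_anti (h : IsTraj a b u v) {c d : ℝ} (hc : 0 ≤ c) (hcd : c ≤ d) (hd : d ≤ 3/4) :
    v d ≤ v c := by
  have h1 := traj_v_sub h hc hcd hd
  have h2 : 0 ≤ ∫ s in c..d, s^2 * G (u s) :=
    intervalIntegral.integral_nonneg hcd (fun s _ => mul_nonneg (sq_nonneg s) (G_nonneg _))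
  linarith

/-- upper linear bound: `u d ≤ u c + (d-c) * v c` -/
lemma traj_u_le (h : IsTraj a b u v) {c d : ℝ} (hc : 0 ≤ c) (hcd : c ≤ d) (hd : d ≤ 3/4) :
    u d ≤ u c + (d - c) * v c := by
  have h1 := traj_u_sub h hc hcd hd
  have h2 : ∫ s in c..d, v s ≤ ∫ s in c..d, v c := by
    apply intervalIntegral.integral_mono_on hcd (h.2.1.intervalIntegrable c d)
      (intervalIntegrable_const)
    intro s hs
    exact traj_v_anti h hc hs.1 (hs.2.trans hd)
  rw [intervalIntegral.integral_const, smul_eq_mul] at h2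
  nlinarith [h1, h2]

/-- lower linear bound: `u d ≥ u c + (d-c) * v d` -/
lemma traj_u_ge (h : IsTraj a b u v) {c d : ℝ} (hc : 0 ≤ c) (hcd : c ≤ d) (hd : d ≤ 3/4) :
    u c + (d - c) * v d ≤ u d := by
  have h1 := traj_u_sub h hc hcd hd
  have h2 : ∫ s in c..d, v d ≤ ∫ s in c..d, v s := by
    apply intervalIntegral.integral_mono_on hcd (intervalIntegrable_const)
      (h.2.1.intervalIntegrable c d)
    intro s hs
    exact traj_v_anti h (hc.trans hs.1) hs.2 hd
  rw [intervalIntegral.integral_const, smul_eq_mul] at h2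
  nlinarith [h1, h2]

/-- integration by parts for the primitive -/
lemma prim_IBP {q : ℝ → ℝ} (hq : Continuous q) (c d : ℝ) :
    ∫ s in c..d, (∫ r in c..s, q r) = d * (∫ r in c..d, q r) - ∫ s in c..d, s * q s := by
  have hA : ∀ x ∈ uIcc c d, HasDerivAt (fun s => ∫ r in c..s, q r) (q x) x :=
    fun x _ => prim_hasDerivAt hq c x
  have hid : ∀ x ∈ uIcc c d, HasDerivAt (fun s : ℝ => s) 1 x := fun x _ => hasDerivAt_id x
  have h := intervalIntegral.integral_mul_deriv_eq_deriv_mul hA hid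
    (hq.intervalIntegrable c d) (intervalIntegrable_const)
  simp only [mul_one, intervalIntegral.integral_same] at h
  rw [h]
  ring_nf
  rw [mul_comm]
  congr 1
  apply intervalIntegral.integral_congr
  intro s _
  ring

/-- second order representation:
`u d = u c + (d-c) v c - ∫_c^d (d-s) q(s) ds` -/
lemma traj_second (h : IsTraj a b u v) {c d : ℝ} (hc : 0 ≤ c) (hcd : c ≤ d) (hd : d ≤ 3/4) :
    u d = u c + (d - c) * v c - ∫ s in c..d, (d - s) * (s^2 * G (u s)) := by
  set q : ℝ → ℝ := fun s => s^2 * G (u s) with hq_def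
  have hqc : Continuous q := traj_q_cont h
  have hA_cont : Continuous (fun s => ∫ r in c..s, q r) := by
    rw [continuous_iff_continuousAt]
    exact fun x => (prim_hasDerivAt hqc c x).continuousAt
  have h1 := traj_u_sub h hc hcd hd
  have h2 : ∫ s in c..d, v s = ∫ s in c..d, (v c - ∫ r in c..s, q r) := by
    apply intervalIntegral.integral_congr
    intro s hs
    rw [uIcc_of_le hcd] at hs
    have hvs := traj_v_sub h hc hs.1 (hs.2.trans hd)
    have : v s = v c - ∫ r in c..s, q r := by
      have h0 := traj_v_sub h (hc.trans hs.1) (le_refl s) ((hs.2.trans hd))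
      have hvc := traj_v_sub h hc hs.1 (hs.2.trans hd)
      linarith [hvc]
    exact this
  have h3 : ∫ s in c..d, (v c - ∫ r in c..s, q r)
      = (d - c) * v c - ∫ s in c..d, (∫ r in c..s, q r) := by
    rw [intervalIntegral.integral_sub intervalIntegrable_const
      (hA_cont.intervalIntegrable c d), intervalIntegral.integral_const, smul_eq_mul, mul_comm]
  have h4 := prim_IBP hqc c d
  have h5 : ∫ s in c..d, (d - s) * q s
      = d * (∫ r in c..d, q r) - ∫ s in c..d, s * q s := by
    have hi1 : IntervalIntegrable (fun s : ℝ => d * q s) volume c d :=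
      (continuous_const.mul hqc).intervalIntegrable c d
    have hi2 : IntervalIntegrable (fun s : ℝ => s * q s) volume c d :=
      (continuous_id.mul hqc).intervalIntegrable c d
    rw [← intervalIntegral.integral_const_mul, ← intervalIntegral.integral_sub hi1 hi2]
    apply intervalIntegral.integral_congr
    intro s _
    simp only
    ring
  have hgoal : u d = u c + (d - c) * v c - ∫ s in c..d, (d - s) * q s := by
    linarith [h1, h2, h3, h4, h5]
  exact hgoal


/-- exact kernel integral -/
lemma ker_val (c d : ℝ) : ∫ s in c..d, (d - s)*s^2 = d*(d^3 - c^3)/3 - (d^4 - c^4)/4 := by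
  have h1 : ∀ s ∈ uIcc c d, (d - s)*s^2 = d * s^2 - s^3 := by intro s _; ring
  rw [intervalIntegral.integral_congr h1]
  have hi1 : IntervalIntegrable (fun s : ℝ => d * s^2) volume c d :=
    (continuous_const.mul (continuous_pow 2)).intervalIntegrable c d
  have hi2 : IntervalIntegrable (fun s : ℝ => s^3) volume c d :=
    (continuous_pow 3).intervalIntegrable c d
  rw [intervalIntegral.integral_sub hi1 hi2, intervalIntegral.integral_const_mul,
    integral_pow, integral_pow]
  norm_num
  ring

/-- kernel upper bound on the drop term -/
lemma drop_le (h : IsTraj a b u v) {c d M : ℝ} (hc : 0 ≤ c) (hcd : c ≤ d) (hd : d ≤ 3/4)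
    (hM : ∀ s ∈ Icc c d, G (u s) ≤ M) :
    ∫ s in c..d, (d - s) * (s^2 * G (u s)) ≤ M * (d*(d^3 - c^3)/3 - (d^4 - c^4)/4) := by
  have hle : ∫ s in c..d, (d - s) * (s^2 * G (u s)) ≤ ∫ s in c..d, M * ((d - s)*s^2) := by
    apply intervalIntegral.integral_mono_on hcd
    · exact (((continuous_const.sub continuous_id).mul (traj_q_cont h))).intervalIntegrable c d
    · exact (continuous_const.mul ((continuous_const.sub continuous_id).mul
        (continuous_pow 2))).intervalIntegrable c d
    · intro s hs
      have h1 : 0 ≤ d - s := by linarith [hs.2]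
      have h2 : (0:ℝ) ≤ s^2 := sq_nonneg s
      have h3 := hM s hs
      have h5 := mul_le_mul_of_nonneg_left h3 (mul_nonneg h1 h2)
      nlinarith [h5]
  rw [intervalIntegral.integral_const_mul, ker_val] at hle
  exact hle

/-- kernel lower bound on the drop term -/
lemma drop_ge (h : IsTraj a b u v) {c d m : ℝ} (hc : 0 ≤ c) (hcd : c ≤ d) (hd : d ≤ 3/4)
    (hm : ∀ s ∈ Icc c d, m ≤ G (u s)) :
    m * (d*(d^3 - c^3)/3 - (d^4 - c^4)/4) ≤ ∫ s in c..d, (d - s) * (s^2 * G (u s)) := by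
  have hle : ∫ s in c..d, m * ((d - s)*s^2) ≤ ∫ s in c..d, (d - s) * (s^2 * G (u s)) := by
    apply intervalIntegral.integral_mono_on hcd
    · exact (continuous_const.mul ((continuous_const.sub continuous_id).mul
        (continuous_pow 2))).intervalIntegrable c d
    · exact (((continuous_const.sub continuous_id).mul (traj_q_cont h))).intervalIntegrable c d
    · intro s hs
      have h1 : 0 ≤ d - s := by linarith [hs.2]
      have h2 : (0:ℝ) ≤ s^2 := sq_nonneg s
      have h3 := hm s hs
      have h5 := mul_le_mul_of_nonneg_left h3 (mul_nonneg h1 h2)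
      nlinarith [h5]
  rw [intervalIntegral.integral_const_mul, ker_val] at hle
  exact hle

/-- drop term is nonnegative -/
lemma drop_nonneg (h : IsTraj a b u v) {c d : ℝ} (hc : 0 ≤ c) (hcd : c ≤ d) (hd : d ≤ 3/4) :
    0 ≤ ∫ s in c..d, (d - s) * (s^2 * G (u s)) := by
  apply intervalIntegral.integral_nonneg hcd
  intro s hs
  have h1 : 0 ≤ d - s := by linarith [hs.2]
  have h4 := G_nonneg (u s)
  nlinarith [sq_nonneg s, mul_nonneg (mul_nonneg h1 (sq_nonneg s)) h4]

end TrajFacts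

/-! ### Sturm-type strict monotonicity in `b` -/

lemma sturm {a b₁ b₂ : ℝ} {u₁ v₁ u₂ v₂ : ℝ → ℝ}
    (h₁ : IsTraj a b₁ u₁ v₁) (h₂ : IsTraj a b₂ u₂ v₂) (hb : b₂ < b₁) :
    u₂ (1/4) < u₁ (1/4) := by
  set w : ℝ → ℝ := fun t => u₁ t - u₂ t with hw_def
  set δ : ℝ := b₁ - b₂ with hδ_def
  have hδ : 0 < δ := by simp only [hδ_def]; linarith
  have hwc : Continuous w := h₁.1.sub h₂.1
  -- representation of w
  have hrep : ∀ t, 0 ≤ t → t ≤ 1/4 →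
      w t = δ * t - ∫ s in (0:ℝ)..t, (t - s) * (s^2 * (G (u₁ s) - G (u₂ s))) := by
    intro t ht0 ht4
    have hta : t ≤ 3/4 := by linarith
    have e₁ := traj_second h₁ (le_refl 0) ht0 hta
    have e₂ := traj_second h₂ (le_refl 0) ht0 hta
    rw [h₁.2.2.1, h₁.2.2.2.1] at e₁
    rw [h₂.2.2.1, h₂.2.2.2.1] at e₂
    have hi1 : IntervalIntegrable (fun s : ℝ => (t - s) * (s^2 * G (u₁ s))) volume 0 t :=
      (((continuous_const.sub continuous_id).mul (traj_q_cont h₁))).intervalIntegrable 0 t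
    have hi2 : IntervalIntegrable (fun s : ℝ => (t - s) * (s^2 * G (u₂ s))) volume 0 t :=
      (((continuous_const.sub continuous_id).mul (traj_q_cont h₂))).intervalIntegrable 0 t
    have hsub : ∫ s in (0:ℝ)..t, (t - s) * (s^2 * (G (u₁ s) - G (u₂ s)))
        = (∫ s in (0:ℝ)..t, (t - s) * (s^2 * G (u₁ s)))
          - ∫ s in (0:ℝ)..t, (t - s) * (s^2 * G (u₂ s)) := by
      rw [← intervalIntegral.integral_sub hi1 hi2]
      apply intervalIntegral.integral_congr
      intro s _
      simp only
      ring
    simp only [hw_def, hδ_def]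
    rw [hsub]
    linarith [e₁, e₂]
  -- general bound given a sup bound for |w|
  have hbound : ∀ (M T : ℝ), T ≤ 1/4 → (∀ y ∈ Icc (0:ℝ) T, |w y| ≤ M) →
      ∀ t, 0 ≤ t → t ≤ T →
      |∫ s in (0:ℝ)..t, (t - s) * (s^2 * (G (u₁ s) - G (u₂ s)))| ≤ 500 * M * t^4 / 12 := by
    intro M T hT4 hsup t ht0 htT
    have habs : |∫ s in (0:ℝ)..t, (t - s) * (s^2 * (G (u₁ s) - G (u₂ s)))|
        ≤ ∫ s in (0:ℝ)..t, |(t - s) * (s^2 * (G (u₁ s) - G (u₂ s)))| :=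
      intervalIntegral.abs_integral_le_integral_abs ht0
    have hmono : ∫ s in (0:ℝ)..t, |(t - s) * (s^2 * (G (u₁ s) - G (u₂ s)))|
        ≤ ∫ s in (0:ℝ)..t, (500 * M) * ((t - s) * s^2) := by
      apply intervalIntegral.integral_mono_on ht0
      · apply Continuous.intervalIntegrable
        exact ((continuous_const.sub continuous_id).mul
          ((continuous_pow 2).mul ((G_cont.comp h₁.1).sub (G_cont.comp h₂.1)))).abs
      · exact (continuous_const.mul ((continuous_const.sub continuous_id).mul
          (continuous_pow 2))).intervalIntegrable 0 t
      · intro s hs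
        have h1 : 0 ≤ t - s := by linarith [hs.2]
        have h2 : (0:ℝ) ≤ s^2 := sq_nonneg s
        have hGl : |G (u₁ s) - G (u₂ s)| ≤ 500 * |w s| := by
          have := G_lip (u₁ s) (u₂ s)
          simpa [hw_def] using this
        have hws : |w s| ≤ M := hsup s ⟨hs.1, hs.2.trans htT⟩
        rw [abs_mul, abs_mul, abs_of_nonneg h1, abs_of_nonneg h2]
        have hGw : |G (u₁ s) - G (u₂ s)| ≤ 500 * M := by linarith
        have h5 := mul_le_mul_of_nonneg_left hGw (mul_nonneg h1 h2)
        nlinarith [h5]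
    rw [intervalIntegral.integral_const_mul, ker_val] at hmono
    calc |∫ s in (0:ℝ)..t, (t - s) * (s^2 * (G (u₁ s) - G (u₂ s)))|
        ≤ (500 * M) * (t*(t^3 - 0^3)/3 - (t^4 - 0^4)/4) := le_trans habs hmono
    _ = 500 * M * t^4 / 12 := by ring
  -- no zero of w in (0, 1/4]
  have key : ∀ τ, 0 < τ → τ ≤ 1/4 → w τ ≠ 0 := by
    intro τ hτ0 hτ4 hwτ
    obtain ⟨x₀, hx₀mem, hx₀max⟩ := isCompact_Icc.exists_isMaxOn (α := ℝ)
      (nonempty_Icc.mpr (by linarith : (0:ℝ) ≤ τ)) (hwc.abs.continuousOn)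
    set M : ℝ := |w x₀| with hM_def
    have hM0 : 0 ≤ M := abs_nonneg _
    have hsup : ∀ y ∈ Icc (0:ℝ) τ, |w y| ≤ M := fun y hy => hx₀max hy
    have hδτ : δ * τ ≤ 500 * M * τ^4 / 12 := by
      have hr := hrep τ hτ0.le hτ4
      rw [hwτ] at hr
      have h2 : δ * τ = ∫ s in (0:ℝ)..τ, (τ - s) * (s^2 * (G (u₁ s) - G (u₂ s))) := by linarith
      calc δ * τ ≤ |∫ s in (0:ℝ)..τ, (τ - s) * (s^2 * (G (u₁ s) - G (u₂ s)))| := by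
            rw [← h2]; exact le_abs_self _
      _ ≤ 500 * M * τ^4 / 12 := hbound M τ hτ4 hsup τ hτ0.le le_rfl
    have hMsmall : M ≤ 500 * M * τ^4 / 6 := by
      have hx0 : (0:ℝ) ≤ x₀ := hx₀mem.1
      have hxτ : x₀ ≤ τ := hx₀mem.2
      have hr := hrep x₀ hx0 (hxτ.trans hτ4)
      have h3 : |w x₀| ≤ δ * x₀ + |∫ s in (0:ℝ)..x₀, (x₀ - s) * (s^2 * (G (u₁ s) - G (u₂ s)))| := by
        rw [hr]
        calc |δ * x₀ - ∫ s in (0:ℝ)..x₀, (x₀ - s) * (s^2 * (G (u₁ s) - G (u₂ s)))|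
            ≤ |δ * x₀| + |∫ s in (0:ℝ)..x₀, (x₀ - s) * (s^2 * (G (u₁ s) - G (u₂ s)))| :=
              abs_sub _ _
        _ = δ * x₀ + _ := by rw [abs_of_nonneg (by positivity)]
      have h4 := hbound M τ hτ4 hsup x₀ hx0 hxτ
      have h5 : δ * x₀ ≤ δ * τ := by nlinarith
      have h6 : 500 * M * x₀^4 / 12 ≤ 500 * M * τ^4 / 12 := by
        nlinarith [pow_le_pow_left₀ hx0 hxτ 4]
      calc M = |w x₀| := rfl
      _ ≤ δ * x₀ + |∫ s in (0:ℝ)..x₀, (x₀ - s) * (s^2 * (G (u₁ s) - G (u₂ s)))| := h3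
      _ ≤ δ * τ + 500 * M * τ^4 / 12 := add_le_add h5 (h4.trans h6)
      _ ≤ 500 * M * τ^4 / 12 + 500 * M * τ^4 / 12 := add_le_add_left hδτ _
      _ = 500 * M * τ^4 / 6 := by ring
    have hτ4' : τ^4 ≤ (1/4:ℝ)^4 := pow_le_pow_left₀ hτ0.le hτ4 4
    have hMzero : M ≤ 0 := by nlinarith
    have hMeq : M = 0 := le_antisymm hMzero hM0
    rw [hMeq] at hδτ
    nlinarith
  -- positivity of w at a small point
  obtain ⟨x₀, hx₀mem, hx₀max⟩ := isCompact_Icc.exists_isMaxOn (α := ℝ)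
    (nonempty_Icc.mpr (by norm_num : (0:ℝ) ≤ 1/4)) (hwc.abs.continuousOn)
  set M₀ : ℝ := |w x₀| with hM₀_def
  have hM₀0 : 0 ≤ M₀ := abs_nonneg _
  have hsup₀ : ∀ y ∈ Icc (0:ℝ) (1/4), |w y| ≤ M₀ := fun y hy => hx₀max hy
  have hM₀pos : 0 < M₀ := by
    rcases lt_or_eq_of_le hM₀0 with h | h
    · exact h
    · exfalso
      have h14 : w (1/4) ≠ 0 := key (1/4) (by norm_num) le_rfl
      have hle : |w (1/4)| ≤ M₀ := hsup₀ _ ⟨by norm_num, le_rfl⟩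
      rw [← h] at hle
      exact h14 (abs_nonpos_iff.mp hle)
  set t₁ : ℝ := min (1/4) (min 1 (6 * δ / (500 * M₀))) with ht₁_def
  have hδM : 0 < 6 * δ / (500 * M₀) := by positivity
  have ht₁0 : 0 < t₁ := lt_min (by norm_num) (lt_min one_pos hδM)
  have ht₁4 : t₁ ≤ 1/4 := min_le_left _ _
  have ht₁1 : t₁ ≤ 1 := le_trans (min_le_right _ _) (min_le_left _ _)
  have ht₁δ : t₁ ≤ 6 * δ / (500 * M₀) := le_trans (min_le_right _ _) (min_le_right _ _)
  have hwt₁ : 0 < w t₁ := by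
    have hrep₁ := hrep t₁ ht₁0.le ht₁4
    have hb₁ := hbound M₀ (1/4) le_rfl hsup₀ t₁ ht₁0.le ht₁4
    clear_value t₁ M₀
    have h7 : 500 * M₀ * t₁^4 / 12 < δ * t₁ := by
      have h3 : t₁^3 ≤ t₁ := by nlinarith [ht₁0.le, ht₁1, sq_nonneg t₁, sq_nonneg (t₁-1)]
      have h5 : 500 * M₀ * t₁ ≤ 6 * δ := by
        have := mul_le_mul_of_nonneg_left ht₁δ (by positivity : (0:ℝ) ≤ 500 * M₀)
        calc 500 * M₀ * t₁ ≤ 500 * M₀ * (6 * δ / (500 * M₀)) := this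
        _ = 6 * δ := by field_simp
      have h9 : 500 * M₀ * t₁ * t₁^3 ≤ 6 * δ * t₁^3 :=
        mul_le_mul_of_nonneg_right h5 (pow_nonneg ht₁0.le 3)
      have h10 : δ * t₁^3 ≤ δ * t₁ := mul_le_mul_of_nonneg_left h3 hδ.le
      nlinarith [mul_pos hδ ht₁0]
    have h8 : w t₁ ≥ δ * t₁ - |∫ s in (0:ℝ)..t₁, (t₁ - s) * (s^2 * (G (u₁ s) - G (u₂ s)))| := by
      rw [hrep₁]
      have := le_abs_self (∫ s in (0:ℝ)..t₁, (t₁ - s) * (s^2 * (G (u₁ s) - G (u₂ s))))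
      linarith
    calc (0:ℝ) < δ * t₁ - 500 * M₀ * t₁ ^ 4 / 12 := by linarith [h7]
    _ ≤ δ * t₁ - |∫ s in (0:ℝ)..t₁, (t₁ - s) * (s^2 * (G (u₁ s) - G (u₂ s)))| := by
        linarith [hb₁]
    _ ≤ w t₁ := by linarith [h8]
  -- conclude w (1/4) > 0
  by_contra hcon
  push_neg at hcon
  have h14ne := key (1/4) (by norm_num) le_rfl
  have hwle : w (1/4) ≤ 0 := by simp only [hw_def]; linarith
  have hcon' : w (1/4) < 0 := lt_of_le_of_ne hwle h14ne
  have hmem : (0:ℝ) ∈ Icc (w (1/4)) (w t₁) := ⟨hcon'.le, hwt₁.le⟩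
  obtain ⟨z, hz_mem, hz⟩ := intermediate_value_Icc' ht₁4 (hwc.continuousOn) hmem
  exact key z (lt_of_lt_of_le ht₁0 hz_mem.1) hz_mem.2 hz


/-! ### The shooting map and selection of b -/

/-- value of `u` at `1/4` for the canonical trajectory -/
def P (a b : ℝ) : ℝ := U a b (1/4)

lemma P_eq {a b : ℝ} {u v : ℝ → ℝ} (h : IsTraj a b u v) : P a b = u (1/4) :=
  (traj_unique (UV_traj a b) h ⟨by norm_num, by norm_num⟩).1

lemma P_mono {a b₁ b₂ : ℝ} (hb : b₂ < b₁) : P a b₂ < P a b₁ := by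
  have := sturm (UV_traj a b₁) (UV_traj a b₂) hb
  simpa [P] using this

lemma P_lipschitz (a b a' b' : ℝ) :
    |P a b - P a' b'| ≤ max |a - a'| |b - b'| * Real.exp 125 := by
  have h := (traj_dist (UV_traj a b) (UV_traj a' b') (t := 1/4) ⟨by norm_num, by norm_num⟩).1
  calc |P a b - P a' b'| = |U a b (1/4) - U a' b' (1/4)| := rfl
  _ ≤ max |a - a'| |b - b'| * Real.exp (500 * (1/4)) := h
  _ = max |a - a'| |b - b'| * Real.exp 125 := by norm_num

lemma P_le (a b : ℝ) : P a b ≤ a + b/4 := by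
  have h := traj_u_le (UV_traj a b) (le_refl 0) (by norm_num : (0:ℝ) ≤ 1/4) (by norm_num)
  rw [(UV_traj a b).2.2.1, (UV_traj a b).2.2.2.1] at h
  calc P a b = U a b (1/4) := rfl
  _ ≤ a + (1/4 - 0) * b := h
  _ = a + b/4 := by ring

lemma P_ge (a b : ℝ) : a + b/4 - 10000/3072 ≤ P a b := by
  have h2 := traj_second (UV_traj a b) (le_refl 0) (by norm_num : (0:ℝ) ≤ 1/4) (by norm_num)
  rw [(UV_traj a b).2.2.1, (UV_traj a b).2.2.2.1] at h2
  have hD := drop_le (UV_traj a b) (le_refl 0) (by norm_num : (0:ℝ) ≤ 1/4) (by norm_num)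
    (M := 10000) (fun s _ => G_le_10000 _)
  have : (10000:ℝ) * ((1/4)*((1/4)^3 - 0^3)/3 - ((1/4)^4 - 0^4)/4) = 10000/3072 := by norm_num
  rw [this] at hD
  calc a + b/4 - 10000/3072 = a + (1/4 - 0) * b - 10000/3072 := by ring
  _ ≤ U a b (1/4) := by linarith
  _ = P a b := rfl

/-- existence of the root `b` of `P a b = 10 a`, for `a ∈ [1/1000, 1]` -/
lemma bsel_exists {a : ℝ} (ha : a ∈ Icc (1/1000 : ℝ) 1) :
    ∃ b ∈ Icc (0:ℝ) 200, P a b = 10 * a := by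
  have hcont : ContinuousOn (fun b => P a b) (Icc 0 200) := by
    rw [Metric.continuousOn_iff]
    intro b _ ε hε
    refine ⟨ε / Real.exp 125, by positivity, fun b' _ hb' => ?_⟩
    have h := P_lipschitz a b' a b
    simp only [sub_self, abs_zero] at h
    rw [max_comm, max_eq_left (abs_nonneg _)] at h
    rw [Real.dist_eq] at hb' ⊢
    calc |P a b' - P a b| ≤ |b' - b| * Real.exp 125 := h
    _ < ε / Real.exp 125 * Real.exp 125 := by
        apply mul_lt_mul_of_pos_right hb' (Real.exp_pos _)
    _ = ε := by field_simp
  have h0 : P a 0 ≤ 10 * a := by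
    have := P_le a 0
    have := ha.1
    linarith
  have h200 : 10 * a ≤ P a 200 := by
    have := P_ge a 200
    have := ha.2
    linarith
  have := intermediate_value_Icc (by norm_num : (0:ℝ) ≤ 200) hcont
  obtain ⟨b, hbmem, hb⟩ := this ⟨h0, h200⟩
  exact ⟨b, hbmem, hb⟩

open Classical in
/-- the selected shooting slope -/
noncomputable def bsel (a : ℝ) : ℝ :=
  if h : ∃ b ∈ Icc (0:ℝ) 200, P a b = 10 * a then Classical.choose h else 0

lemma bsel_spec {a : ℝ} (ha : a ∈ Icc (1/1000 : ℝ) 1) :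
    bsel a ∈ Icc (0:ℝ) 200 ∧ P a (bsel a) = 10 * a := by
  have h := bsel_exists ha
  rw [bsel, dif_pos h]
  exact ⟨(Classical.choose_spec h).1, (Classical.choose_spec h).2⟩

lemma bsel_unique {a b : ℝ} (ha : a ∈ Icc (1/1000 : ℝ) 1) (hb : P a b = 10 * a) :
    b = bsel a := by
  obtain ⟨_, hP⟩ := bsel_spec ha
  by_contra hne
  rcases lt_or_gt_of_ne hne with h | h
  · have := P_mono (a := a) h
    rw [hb, hP] at this
    exact lt_irrefl _ this
  · have := P_mono (a := a) h
    rw [hb, hP] at this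
    exact lt_irrefl _ this

lemma P_mono_le {a b b' : ℝ} (h : b ≤ b') : P a b ≤ P a b' := by
  rcases eq_or_lt_of_le h with h | h
  · rw [h]
  · exact (P_mono h).le

/-- Lipschitz bound in the `a` variable, fixed second argument -/
lemma P_lip_a (a a' x : ℝ) : P a x - P a' x ≤ |a - a'| * Real.exp 125 := by
  have hl := P_lipschitz a x a' x
  simp only [sub_self, abs_zero] at hl
  rw [max_eq_left (abs_nonneg _)] at hl
  calc P a x - P a' x ≤ |P a x - P a' x| := le_abs_self _
  _ ≤ |a - a'| * Real.exp 125 := hl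

/-- continuity of `bsel` on `[1/1000, 1]`, in ε-δ form -/
lemma bsel_cont {a : ℝ} (ha : a ∈ Icc (1/1000 : ℝ) 1) {ε : ℝ} (hε : 0 < ε) :
    ∃ δ > 0, ∀ a' ∈ Icc (1/1000 : ℝ) 1, |a' - a| < δ → |bsel a' - bsel a| < ε := by
  obtain ⟨hmem, hP⟩ := bsel_spec ha
  set β := bsel a with hβ_def
  set ε' := min ε 1 with hε'_def
  have hε'0 : 0 < ε' := lt_min hε one_pos
  have hε'ε : ε' ≤ ε := min_le_left _ _
  have hup : P a β < P a (β + ε') := P_mono (by linarith)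
  have hdn : P a (β - ε') < P a β := P_mono (by linarith)
  set E := Real.exp 125 with hE_def
  have hE : (0:ℝ) < E + 10 := by positivity
  set m₁ := P a (β + ε') - 10 * a with hm₁
  set m₂ := 10 * a - P a (β - ε') with hm₂
  have hm₁0 : 0 < m₁ := by rw [hm₁, ← hP]; linarith
  have hm₂0 : 0 < m₂ := by rw [hm₂, ← hP]; linarith
  set δ := min m₁ m₂ / (2 * (E + 10)) with hδ_def
  have hδ0 : 0 < δ := by
    apply div_pos (lt_min hm₁0 hm₂0)
    positivity
  refine ⟨δ, hδ0, fun a' ha' haa => ?_⟩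
  obtain ⟨hmem', hP'⟩ := bsel_spec ha'
  set D := |a' - a| with hD_def
  have hD0 : 0 ≤ D := abs_nonneg _
  have hDE : D * (E + 10) < min m₁ m₂ := by
    have h1 : D * (2 * (E + 10)) < min m₁ m₂ := by
      rw [← lt_div_iff₀ (by positivity)]
      exact haa
    nlinarith
  have hDm₁ : D * (E + 10) < m₁ := lt_of_lt_of_le hDE (min_le_left _ _)
  have hDm₂ : D * (E + 10) < m₂ := lt_of_lt_of_le hDE (min_le_right _ _)
  have haa' : |a - a'| = D := by rw [hD_def, abs_sub_comm]
  have hkey1 : 10 * a' < P a' (β + ε') := by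
    have hl2 : P a (β + ε') - P a' (β + ε') ≤ D * E := by
      have := P_lip_a a a' (β + ε')
      rwa [haa'] at this
    have h2 : 10 * a' - 10 * a ≤ 10 * D := by
      have habs : a' - a ≤ |a' - a| := le_abs_self _
      rw [← hD_def] at habs
      linarith
    nlinarith
  have hkey2 : P a' (β - ε') < 10 * a' := by
    have hl2 : P a' (β - ε') - P a (β - ε') ≤ D * E := by
      have := P_lip_a a' a (β - ε')
      rwa [← hD_def] at this
    have h2 : 10 * a - 10 * a' ≤ 10 * D := by
      have habs : a - a' ≤ |a - a'| := le_abs_self _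
      rw [haa'] at habs
      linarith
    nlinarith
  have hlt : bsel a' < β + ε' := by
    by_contra hc
    push_neg at hc
    have := P_mono_le (a := a') hc
    rw [hP'] at this
    linarith
  have hgt : β - ε' < bsel a' := by
    by_contra hc
    push_neg at hc
    have := P_mono_le (a := a') hc
    rw [hP'] at this
    linarith
  rw [abs_lt]
  constructor <;> [linarith; linarith]


/-! ### Quantitative facts at a root of the boundary condition -/

section RootFacts

variable {a b : ℝ} {u v : ℝ → ℝ}

/-- the `s² G(u s)` integral bound -/
lemma int_sq_le (h : IsTraj a b u v) {c d M : ℝ} (hc : 0 ≤ c) (hcd : c ≤ d) (hd : d ≤ 3/4)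
    (hM : ∀ s ∈ Icc c d, G (u s) ≤ M) :
    ∫ s in c..d, s^2 * G (u s) ≤ M * (d^3 - c^3)/3 := by
  have hle : ∫ s in c..d, s^2 * G (u s) ≤ ∫ s in c..d, M * s^2 := by
    apply intervalIntegral.integral_mono_on hcd
    · exact (traj_q_cont h).intervalIntegrable c d
    · exact (continuous_const.mul (continuous_pow 2)).intervalIntegrable c d
    · intro s hs
      have h3 := hM s hs
      have h4 := G_nonneg (u s)
      nlinarith [sq_nonneg s]
  rw [intervalIntegral.integral_const_mul, integral_pow] at hle
  calc ∫ s in c..d, s^2 * G (u s) ≤ M * ((d^(2+1) - c^(2+1))/(2+1)) := hle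
  _ = M * (d^3 - c^3)/3 := by norm_num; ring

lemma rf_E (h : IsTraj a b u v) (hroot : u (1/4) = 10*a) :
    b = 36*a + 4 * ∫ s in (0:ℝ)..(1/4), (1/4 - s)*(s^2 * G (u s)) := by
  have h2 := traj_second h (le_refl 0) (by norm_num : (0:ℝ) ≤ 1/4) (by norm_num)
  rw [h.2.2.1, h.2.2.2.1, hroot] at h2
  linarith

lemma rf_b_ge (h : IsTraj a b u v) (hroot : u (1/4) = 10*a) : 36*a ≤ b := by
  have h1 := rf_E h hroot
  have h2 := drop_nonneg h (le_refl 0) (by norm_num : (0:ℝ) ≤ 1/4) (by norm_num)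
  linarith

lemma rf_u_upper (h : IsTraj a b u v) {t : ℝ} (ht0 : 0 ≤ t) (ht : t ≤ 3/4) :
    u t ≤ a + t * b := by
  have h1 := traj_u_le h (le_refl 0) ht0 ht
  rw [h.2.2.1, h.2.2.2.1] at h1
  linarith

/-- generic `E`-bound given a uniform `G`-bound on `[0,1/4]` -/
lemma rf_E_le (h : IsTraj a b u v) {M : ℝ} (hM : ∀ s ∈ Icc (0:ℝ) (1/4), G (u s) ≤ M) :
    ∫ s in (0:ℝ)..(1/4), (1/4 - s)*(s^2 * G (u s)) ≤ M / 3072 := by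
  have hD := drop_le h (le_refl 0) (by norm_num : (0:ℝ) ≤ 1/4) (by norm_num) hM
  have hker : M * ((1/4)*((1/4)^3 - 0^3)/3 - ((1/4)^4 - 0^4)/4) = M / 3072 := by ring
  rw [hker] at hD
  have hcong : ∀ s ∈ uIcc (0:ℝ) (1/4), (1/4 - s)*(s^2 * G (u s)) = ((1:ℝ)/4 - s) * (s^2 * G (u s)) := by
    intro s _; norm_num
  exact le_of_eq_of_le (by norm_num) hD

/-- `G (u s) ≤ G (a + b/4)` on `[0,1/4]` provided `0 ≤ b` -/
lemma rf_G_bound14 (h : IsTraj a b u v) (hb0 : 0 ≤ b) :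
    ∀ s ∈ Icc (0:ℝ) (1/4), G (u s) ≤ G (a + b/4) := by
  intro s hs
  apply G_mono
  have h1 := rf_u_upper h hs.1 (by linarith [hs.2] : s ≤ 3/4)
  have h2 : s * b ≤ (1/4) * b := mul_le_mul_of_nonneg_right hs.2 hb0
  linarith

/-- chained upper bound on `b` -/
lemma rf_b_le (h : IsTraj a b u v) (hroot : u (1/4) = 10*a)
    (ha : a ∈ Icc (1/1000:ℝ) 1) (hb : b ∈ Icc (0:ℝ) 200) : b ≤ 36*a + 0.63 := by
  have hE := rf_E h hroot
  -- round 1 : crude bound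
  have hE1 : ∫ s in (0:ℝ)..(1/4), (1/4 - s)*(s^2 * G (u s)) ≤ 10000 / 3072 :=
    rf_E_le h (fun s _ => G_le_10000 _)
  have hb1 : b ≤ 36*a + 13.03 := by
    rw [hE]
    have : 4 * (10000/3072 : ℝ) ≤ 13.03 := by norm_num
    linarith
  -- round 2 : refined
  have hM1 : a + b/4 ≤ 13.3 := by
    have := ha.2
    linarith
  have hG1 : G (a + b/4) ≤ 13.3^2 * 2.7 := by
    have hle : G (a + b/4) ≤ G 13.3 := G_mono hM1
    have := G_le_sq (x := (13.3:ℝ)) (by norm_num)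
    have hm : max (0:ℝ) 13.3 = 13.3 := by norm_num
    rw [hm] at this
    linarith
  have hE2 : ∫ s in (0:ℝ)..(1/4), (1/4 - s)*(s^2 * G (u s)) ≤ (13.3^2 * 2.7) / 3072 := by
    apply le_trans (rf_E_le h (fun s hs => le_trans (rf_G_bound14 h hb.1 s hs) hG1))
    norm_num
  rw [hE]
  have : 4 * ((13.3^2 * 2.7) / 3072 : ℝ) ≤ 0.63 := by norm_num
  linarith

/-- lower bound on `v (1/4)` -/
lemma rf_v4_ge (h : IsTraj a b u v) (hroot : u (1/4) = 10*a)
    (ha : a ∈ Icc (1/1000:ℝ) 1) (hb : b ∈ Icc (0:ℝ) 200) : 36*a - 1.46 ≤ v (1/4) := by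
  have hble := rf_b_le h hroot ha hb
  have hbge := rf_b_ge h hroot
  have hvs := traj_v_sub h (le_refl 0) (by norm_num : (0:ℝ) ≤ 1/4) (by norm_num)
  rw [h.2.2.2.1] at hvs
  have hM1 : a + b/4 ≤ 10.16 := by
    have := ha.2
    linarith
  have hG1 : G (a + b/4) ≤ 10.16^2 * 2.7 := by
    have hle : G (a + b/4) ≤ G 10.16 := G_mono hM1
    have := G_le_sq (x := (10.16:ℝ)) (by norm_num)
    have hm : max (0:ℝ) 10.16 = 10.16 := by norm_num
    rw [hm] at this
    linarith
  have hint : ∫ s in (0:ℝ)..(1/4), s^2 * G (u s) ≤ (10.16^2 * 2.7) * ((1/4)^3 - 0^3)/3 :=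
    int_sq_le h (le_refl 0) (by norm_num) (by norm_num)
      (fun s hs => le_trans (rf_G_bound14 h hb.1 s hs) hG1)
  have : ((10.16:ℝ)^2 * 2.7) * ((1/4)^3 - 0^3)/3 ≤ 1.46 := by norm_num
  linarith

/-- upper bound on `v (1/4)` -/
lemma rf_v4_le (h : IsTraj a b u v) (hroot : u (1/4) = 10*a) : v (1/4) ≤ 36*a := by
  have h1 := traj_u_ge h (le_refl 0) (by norm_num : (0:ℝ) ≤ 1/4) (by norm_num)
  rw [h.2.2.1, hroot] at h1
  linarith

/-- lower bound for the boundary integral -/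
lemma rf_int_ge (h : IsTraj a b u v) :
    a/4 + (v (1/4))/32 ≤ ∫ s in (0:ℝ)..(1/4), u s := by
  have hpt : ∀ s ∈ Icc (0:ℝ) (1/4), a + s * v (1/4) ≤ u s := by
    intro s hs
    have h1 := traj_u_ge h (le_refl 0) hs.1 (by linarith [hs.2] : s ≤ 3/4)
    rw [h.2.2.1] at h1
    have h2 : v (1/4) ≤ v s := traj_v_anti h hs.1 hs.2 (by norm_num)
    have h3 : s * v (1/4) ≤ s * v s := mul_le_mul_of_nonneg_left h2 hs.1
    linarith
  have hmono : ∫ s in (0:ℝ)..(1/4), (a + s * v (1/4)) ≤ ∫ s in (0:ℝ)..(1/4), u s := by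
    apply intervalIntegral.integral_mono_on (by norm_num)
    · exact (continuous_const.add (continuous_id.mul continuous_const)).intervalIntegrable 0 (1/4)
    · exact h.1.intervalIntegrable 0 (1/4)
    · exact hpt
  have hi : IntervalIntegrable (fun s : ℝ => s * v (1/4)) volume 0 (1/4) :=
    (continuous_id.mul continuous_const).intervalIntegrable 0 (1/4)
  have hval : ∫ s in (0:ℝ)..(1/4), (a + s * v (1/4)) = a/4 + (v (1/4))/32 := by
    rw [intervalIntegral.integral_add (intervalIntegrable_const) hi,
      intervalIntegral.integral_const, intervalIntegral.integral_mul_const, integral_id]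
    simp
    ring
  linarith

/-- upper bound for the boundary integral -/
lemma rf_int_le (h : IsTraj a b u v) (hb0 : 0 ≤ b) :
    ∫ s in (0:ℝ)..(1/4), u s ≤ a/4 + b/32 := by
  have hpt : ∀ s ∈ Icc (0:ℝ) (1/4), u s ≤ a + s * b := by
    intro s hs
    exact rf_u_upper h hs.1 (by linarith [hs.2])
  have hmono : ∫ s in (0:ℝ)..(1/4), u s ≤ ∫ s in (0:ℝ)..(1/4), (a + s * b) := by
    apply intervalIntegral.integral_mono_on (by norm_num)
    · exact h.1.intervalIntegrable 0 (1/4)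
    · exact (continuous_const.add (continuous_id.mul continuous_const)).intervalIntegrable 0 (1/4)
    · exact hpt
  have hi : IntervalIntegrable (fun s : ℝ => s * b) volume 0 (1/4) :=
    (continuous_id.mul continuous_const).intervalIntegrable 0 (1/4)
  have hval : ∫ s in (0:ℝ)..(1/4), (a + s * b) = a/4 + b/32 := by
    rw [intervalIntegral.integral_add (intervalIntegrable_const) hi,
      intervalIntegral.integral_const, intervalIntegral.integral_mul_const, integral_id]
    simp
    ring
  linarith

end RootFacts


/-! ### The boundary-condition function and endpoint signs -/

/-- boundary condition defect -/
noncomputable def gfun (a : ℝ) : ℝ :=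
  U a (bsel a) (3/4) - 20 * ∫ s in (0:ℝ)..(1/4), U a (bsel a) s

lemma ha_small : (1/1000 : ℝ) ∈ Icc (1/1000:ℝ) 1 := by constructor <;> norm_num
lemma ha_one : (1 : ℝ) ∈ Icc (1/1000:ℝ) 1 := by constructor <;> norm_num

lemma root_eq {a : ℝ} (ha : a ∈ Icc (1/1000:ℝ) 1) : U a (bsel a) (1/4) = 10 * a :=
  (bsel_spec ha).2

/-- the sign of `gfun` at the left endpoint -/
lemma gfun_small : 0 < gfun (1/1000) := by
  set a : ℝ := 1/1000 with ha_def
  set b : ℝ := bsel a with hb_def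
  have ha : a ∈ Icc (1/1000:ℝ) 1 := ha_small
  have hmem : b ∈ Icc (0:ℝ) 200 := (bsel_spec ha).1
  have h : IsTraj a b (U a b) (V a b) := UV_traj a b
  have hroot : U a b (1/4) = 10 * a := root_eq ha
  have hbge : 36*a ≤ b := rf_b_ge h hroot
  have hble1 : b ≤ 36*a + 0.63 := rf_b_le h hroot ha hmem
  -- refined bound on b
  have hM1 : a + b/4 ≤ 0.1675 := by
    rw [ha_def] at *
    norm_num at *
    linarith
  have hG1 : ∀ s ∈ Icc (0:ℝ) (1/4), G (U a b s) ≤ 0.0047 := by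
    intro s hs
    have h1 := rf_G_bound14 h hmem.1 s hs
    have h2 : G (a + b/4) ≤ G 0.1675 := G_mono hM1
    have h3 := G_le_cube (0.1675:ℝ)
    have hm : max (0:ℝ) 0.1675 = 0.1675 := by norm_num
    rw [hm] at h3
    have : (0.1675:ℝ)^3 ≤ 0.0047 := by norm_num
    linarith
  have hE2 : ∫ s in (0:ℝ)..(1/4), (1/4 - s)*(s^2 * G (U a b s)) ≤ 0.0047/3072 :=
    rf_E_le h hG1
  have hb2 : b ≤ 36*a + 0.0000062 := by
    have hE := rf_E h hroot
    rw [hE]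
    have : (4:ℝ) * (0.0047/3072) ≤ 0.0000062 := by norm_num
    linarith
  -- upper bound for u on [0, 3/4]
  have hu_up : ∀ s ∈ Icc (0:ℝ) (3/4), U a b s ≤ 0.02802 := by
    intro s hs
    have h1 := rf_u_upper h hs.1 hs.2
    have h2 : s * b ≤ (3/4) * b := mul_le_mul_of_nonneg_right hs.2 hmem.1
    rw [ha_def] at *
    norm_num at *
    linarith
  -- the drop over [0, 3/4]
  have hD : ∫ s in (0:ℝ)..(3/4), (3/4 - s)*(s^2 * G (U a b s)) ≤ 0.0000006 := by
    have hGb : ∀ s ∈ Icc (0:ℝ) (3/4), G (U a b s) ≤ 0.0000221 := by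
      intro s hs
      have h2 : G (U a b s) ≤ G 0.02802 := G_mono (hu_up s hs)
      have h3 := G_le_cube (0.02802:ℝ)
      have hm : max (0:ℝ) 0.02802 = 0.02802 := by norm_num
      rw [hm] at h3
      have : (0.02802:ℝ)^3 ≤ 0.0000221 := by norm_num
      linarith
    have hd := drop_le h (le_refl 0) (by norm_num : (0:ℝ) ≤ 3/4) (le_refl _) hGb
    have : (0.0000221:ℝ) * ((3/4)*((3/4)^3 - 0^3)/3 - ((3/4)^4 - 0^4)/4) ≤ 0.0000006 := by
      norm_num
    linarith
  -- conclude
  have hsec := traj_second h (le_refl 0) (by norm_num : (0:ℝ) ≤ 3/4) (le_refl _)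
  rw [h.2.2.1, h.2.2.2.1] at hsec
  have hint := rf_int_le h hmem.1
  have hg : gfun a = U a b (3/4) - 20 * ∫ s in (0:ℝ)..(1/4), U a b s := rfl
  rw [hg, hsec]
  rw [ha_def] at *
  norm_num at *
  linarith

/-- the sign of `gfun` at the right endpoint -/
lemma gfun_one : gfun 1 < 0 := by
  set b : ℝ := bsel 1 with hb_def
  have ha : (1:ℝ) ∈ Icc (1/1000:ℝ) 1 := ha_one
  have hmem : b ∈ Icc (0:ℝ) 200 := (bsel_spec ha).1
  have h : IsTraj 1 b (U 1 b) (V 1 b) := UV_traj 1 b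
  have hroot : U 1 b (1/4) = 10 * 1 := root_eq ha
  have hbge : 36*1 ≤ b := rf_b_ge h hroot
  have hble : b ≤ 36*1 + 0.63 := rf_b_le h hroot ha hmem
  have hv4ge : 36*1 - 1.46 ≤ V 1 b (1/4) := rf_v4_ge h hroot ha hmem
  have hv4le : V 1 b (1/4) ≤ 36*1 := rf_v4_le h hroot
  have hIq : 1/4 + (V 1 b (1/4))/32 ≤ ∫ s in (0:ℝ)..(1/4), U 1 b s := by
    have := rf_int_ge h
    linarith
  have hsec := traj_second h (by norm_num : (0:ℝ) ≤ 1/4) (by norm_num : (1/4:ℝ) ≤ 3/4)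
    (le_refl _)
  rw [hroot] at hsec
  have hg : gfun 1 = U 1 b (3/4) - 20 * ∫ s in (0:ℝ)..(1/4), U 1 b s := rfl
  by_cases hcase : ∀ s ∈ Icc (1/4:ℝ) (3/4), 7 ≤ U 1 b s
  · -- case A : big drop
    have hdrop : (98:ℝ) * ((3/4)*((3/4)^3 - (1/4)^3)/3 - ((3/4)^4 - (1/4)^4)/4)
        ≤ ∫ s in (1/4:ℝ)..(3/4), (3/4 - s)*(s^2 * G (U 1 b s)) := by
      apply drop_ge h (by norm_num) (by norm_num) (le_refl _)
      intro s hs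
      calc (98:ℝ) ≤ G 7 := G_seven
      _ ≤ G (U 1 b s) := G_mono (hcase s hs)
    have hker : (98:ℝ) * ((3/4)*((3/4)^3 - (1/4)^3)/3 - ((3/4)^4 - (1/4)^4)/4) = 98 * 3/128 := by
      norm_num
    rw [hg]
    nlinarith [hdrop, hsec, hIq, hv4ge, hv4le]
  · -- case B : u dips below 7
    push_neg at hcase
    obtain ⟨σ, hσmem, hσ⟩ := hcase
    by_cases hv : V 1 b σ ≤ 0
    · have h34 : U 1 b (3/4) ≤ U 1 b σ := by
        have h1 := traj_u_le h (by linarith [hσmem.1] : (0:ℝ) ≤ σ) hσmem.2 (le_refl _)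
        have h2 : (3/4 - σ) * V 1 b σ ≤ 0 :=
          mul_nonpos_of_nonneg_of_nonpos (by linarith [hσmem.2]) hv
        linarith
      rw [hg]
      nlinarith [hIq, hv4ge, h34, hσ]
    · push_neg at hv
      exfalso
      have h1 := traj_u_ge h (by norm_num : (0:ℝ) ≤ 1/4) hσmem.1 hσmem.2
      rw [hroot] at h1
      have h2 : 0 ≤ (σ - 1/4) * V 1 b σ :=
        mul_nonneg (by linarith [hσmem.1]) hv.le
      linarith


/-! ### Continuity of `gfun` and the intermediate value argument -/

lemma U34_lip (a b a' b' : ℝ) :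
    |U a b (3/4) - U a' b' (3/4)| ≤ max |a - a'| |b - b'| * Real.exp 375 := by
  have h := (traj_dist (UV_traj a b) (UV_traj a' b') (t := 3/4)
    ⟨by norm_num, le_refl _⟩).1
  calc |U a b (3/4) - U a' b' (3/4)| ≤ max |a - a'| |b - b'| * Real.exp (500 * (3/4)) := h
  _ = max |a - a'| |b - b'| * Real.exp 375 := by norm_num

lemma Iq_lip (a b a' b' : ℝ) :
    |(∫ s in (0:ℝ)..(1/4), U a b s) - ∫ s in (0:ℝ)..(1/4), U a' b' s|
      ≤ max |a - a'| |b - b'| * Real.exp 375 / 4 := by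
  have hsub : (∫ s in (0:ℝ)..(1/4), U a b s) - ∫ s in (0:ℝ)..(1/4), U a' b' s
      = ∫ s in (0:ℝ)..(1/4), (U a b s - U a' b' s) := by
    rw [intervalIntegral.integral_sub ((UV_traj a b).1.intervalIntegrable 0 (1/4))
      ((UV_traj a' b').1.intervalIntegrable 0 (1/4))]
  rw [hsub]
  have hC : ∀ s ∈ Set.uIoc (0:ℝ) (1/4), ‖U a b s - U a' b' s‖ ≤ max |a - a'| |b - b'| * Real.exp 375 := by
    intro s hs
    rw [uIoc_of_le (by norm_num : (0:ℝ) ≤ 1/4)] at hs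
    have hsmem : s ∈ Icc (0:ℝ) (3/4) := ⟨hs.1.le, by linarith [hs.2]⟩
    have h := (traj_dist (UV_traj a b) (UV_traj a' b') hsmem).1
    have hexp : Real.exp (500 * s) ≤ Real.exp 375 := by
      apply Real.exp_le_exp.2
      linarith [hs.2]
    rw [Real.norm_eq_abs]
    calc |U a b s - U a' b' s| ≤ max |a - a'| |b - b'| * Real.exp (500 * s) := h
    _ ≤ max |a - a'| |b - b'| * Real.exp 375 := by
        apply mul_le_mul_of_nonneg_left hexp
        exact le_trans (abs_nonneg _) (le_max_left _ _)
  have := intervalIntegral.norm_integral_le_of_norm_le_const hC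
  rw [Real.norm_eq_abs] at this
  calc |∫ s in (0:ℝ)..(1/4), (U a b s - U a' b' s)|
      ≤ max |a - a'| |b - b'| * Real.exp 375 * |(1/4:ℝ) - 0| := this
  _ = max |a - a'| |b - b'| * Real.exp 375 / 4 := by
      rw [show |(1/4:ℝ) - 0| = 1/4 by norm_num]; ring

lemma gfun_contOn : ContinuousOn gfun (Icc (1/1000:ℝ) 1) := by
  rw [Metric.continuousOn_iff]
  intro a ha ε hε
  set E3 := Real.exp 375 with hE3
  have hE3p : 0 < E3 := Real.exp_pos _
  set m := ε / (6 * E3 + 1) with hm_def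
  have hm : 0 < m := by positivity
  obtain ⟨δ₁, hδ₁, hδsel⟩ := bsel_cont ha hm
  refine ⟨min δ₁ m, lt_min hδ₁ hm, fun a' ha' hd => ?_⟩
  rw [Real.dist_eq] at hd
  have hd₁ : |a' - a| < δ₁ := lt_of_lt_of_le hd (min_le_left _ _)
  have hdm : |a' - a| < m := lt_of_lt_of_le hd (min_le_right _ _)
  have hbm : |bsel a' - bsel a| < m := hδsel a' ha' hd₁
  have hmax : max |a' - a| |bsel a' - bsel a| ≤ m := max_le hdm.le hbm.le
  have h34 := U34_lip a' (bsel a') a (bsel a)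
  have hIq := Iq_lip a' (bsel a') a (bsel a)
  rw [Real.dist_eq]
  have hexpand : gfun a' - gfun a
      = (U a' (bsel a') (3/4) - U a (bsel a) (3/4))
        - 20 * ((∫ s in (0:ℝ)..(1/4), U a' (bsel a') s) - ∫ s in (0:ℝ)..(1/4), U a (bsel a) s) := by
    rw [gfun, gfun]; ring
  rw [hexpand]
  have habs : |(U a' (bsel a') (3/4) - U a (bsel a) (3/4))
        - 20 * ((∫ s in (0:ℝ)..(1/4), U a' (bsel a') s) - ∫ s in (0:ℝ)..(1/4), U a (bsel a) s)|
      ≤ |U a' (bsel a') (3/4) - U a (bsel a) (3/4)|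
        + 20 * |(∫ s in (0:ℝ)..(1/4), U a' (bsel a') s) - ∫ s in (0:ℝ)..(1/4), U a (bsel a) s| := by
    have h1 := abs_sub (U a' (bsel a') (3/4) - U a (bsel a) (3/4))
      (20 * ((∫ s in (0:ℝ)..(1/4), U a' (bsel a') s) - ∫ s in (0:ℝ)..(1/4), U a (bsel a) s))
    rw [abs_mul, show |(20:ℝ)| = 20 by norm_num] at h1
    linarith
  have hmm : max |a' - a| |bsel a' - bsel a| * E3 ≤ m * E3 :=
    mul_le_mul_of_nonneg_right hmax hE3p.le
  have hfinal : m * E3 + 20 * (m * E3 / 4) < ε := by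
    have : m * (6 * E3 + 1) = ε := by
      rw [hm_def]; field_simp
    nlinarith [hm, hE3p]
  calc |(U a' (bsel a') (3/4) - U a (bsel a) (3/4))
        - 20 * ((∫ s in (0:ℝ)..(1/4), U a' (bsel a') s) - ∫ s in (0:ℝ)..(1/4), U a (bsel a) s)|
      ≤ |U a' (bsel a') (3/4) - U a (bsel a) (3/4)|
        + 20 * |(∫ s in (0:ℝ)..(1/4), U a' (bsel a') s) - ∫ s in (0:ℝ)..(1/4), U a (bsel a) s| := habs
  _ ≤ max |a' - a| |bsel a' - bsel a| * E3
        + 20 * (max |a' - a| |bsel a' - bsel a| * E3 / 4) := by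
      have h20 : (0:ℝ) ≤ 20 := by norm_num
      have := mul_le_mul_of_nonneg_left hIq h20
      linarith [h34, this]
  _ ≤ m * E3 + 20 * (m * E3 / 4) := by linarith [hmm]
  _ < ε := hfinal

/-- the root of `gfun` -/
lemma gfun_root : ∃ a ∈ Icc (1/1000:ℝ) 1, gfun a = 0 := by
  have h := intermediate_value_Icc' (by norm_num : (1/1000:ℝ) ≤ 1) gfun_contOn
  have h0 : (0:ℝ) ∈ Icc (gfun 1) (gfun (1/1000)) := ⟨gfun_one.le, gfun_small.le⟩
  obtain ⟨x, hx, hgx⟩ := h h0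
  exact ⟨x, hx, hgx⟩

/-! ### Positivity -/

lemma traj_pos {a b : ℝ} {u v : ℝ → ℝ} (h : IsTraj a b u v) {t₁ t₂ : ℝ}
    (h0 : 0 ≤ t₁) (h12 : t₁ ≤ t₂) (h2 : t₂ ≤ 3/4)
    (hu₁ : 0 < u t₁) (hu₂ : 0 < u t₂) : ∀ t ∈ Icc t₁ t₂, 0 < u t := by
  intro σ hσ
  by_contra hc
  push_neg at hc
  -- v is negative somewhere in [t₁, σ]
  have hρ : ∃ ρ ∈ Icc t₁ σ, v ρ < 0 := by
    by_contra hall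
    push_neg at hall
    have hint : 0 ≤ ∫ s in t₁..σ, v s :=
      intervalIntegral.integral_nonneg hσ.1 (fun s hs => hall s hs)
    have := traj_u_sub h h0 hσ.1 (by linarith [hσ.2])
    linarith
  obtain ⟨ρ, hρmem, hρneg⟩ := hρ
  -- v stays ≤ v ρ < 0 afterwards
  have hmono : ∫ s in σ..t₂, v s ≤ ∫ s in σ..t₂, v ρ := by
    apply intervalIntegral.integral_mono_on hσ.2
    · exact h.2.1.intervalIntegrable σ t₂
    · exact intervalIntegrable_const
    · intro s hs
      exact traj_v_anti h (h0.trans hρmem.1) (hρmem.2.trans hs.1) (hs.2.trans h2)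
  rw [intervalIntegral.integral_const, smul_eq_mul] at hmono
  have hsub := traj_u_sub h (h0.trans hσ.1) hσ.2 h2
  have hneg : (t₂ - σ) * v ρ ≤ 0 :=
    mul_nonpos_of_nonneg_of_nonpos (by linarith [hσ.2]) hρneg.le
  linarith

/-! ### Main theorem -/

theorem stmt_12 :
    ∃ u u' u'' : ℝ → ℝ,
      (∀ t ∈ Set.Icc (0:ℝ) (3 / 4), HasDerivWithinAt u (u' t) (Set.Icc 0 (3 / 4)) t) ∧
      (∀ t ∈ Set.Icc (0:ℝ) (3 / 4), HasDerivWithinAt u' (u'' t) (Set.Icc 0 (3 / 4)) t) ∧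
      ContinuousOn u'' (Set.Icc 0 (3 / 4)) ∧
      (∀ t ∈ Set.Ioo (0:ℝ) (3 / 4),
        u'' t + t ^ 2 * u t ^ 2 * Real.log (1 + u t) = 0) ∧
      u 0 = (1 / 10) * u (1 / 4) ∧
      u (3 / 4) = 20 * (∫ s in (0:ℝ)..(1 / 4), u s) ∧
      (∀ t ∈ Set.Ioo (0:ℝ) (3 / 4), 0 < u t) := by
  obtain ⟨a, ha, hga⟩ := gfun_root
  set b : ℝ := bsel a with hb_def
  have hmem : b ∈ Icc (0:ℝ) 200 := (bsel_spec ha).1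
  set u : ℝ → ℝ := U a b with hu_def
  set v : ℝ → ℝ := V a b with hv_def
  have h : IsTraj a b u v := UV_traj a b
  have hroot : u (1/4) = 10 * a := root_eq ha
  have hu0 : u 0 = a := h.2.2.1
  have ha0 : 0 < a := lt_of_lt_of_le (by norm_num) ha.1
  -- positivity on [0, 1/4]
  have hpos14 : ∀ t ∈ Icc (0:ℝ) (1/4), 0 < u t := by
    apply traj_pos h (le_refl 0) (by norm_num) (by norm_num)
    · rw [hu0]; exact ha0
    · rw [hroot]; linarith
  -- the integral is positive
  have hIpos : 0 < ∫ s in (0:ℝ)..(1/4), u s := by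
    apply intervalIntegral.intervalIntegral_pos_of_pos_on
      (h.1.intervalIntegrable 0 (1/4)) _ (by norm_num)
    intro s hs
    exact hpos14 s ⟨hs.1.le, hs.2.le⟩
  -- value at 3/4
  have h34 : u (3/4) = 20 * ∫ s in (0:ℝ)..(1/4), u s := by
    have : gfun a = u (3/4) - 20 * ∫ s in (0:ℝ)..(1/4), u s := rfl
    rw [this] at hga
    linarith
  have hpos34 : 0 < u (3/4) := by rw [h34]; linarith
  -- positivity on [1/4, 3/4]
  have hpos1434 : ∀ t ∈ Icc (1/4:ℝ) (3/4), 0 < u t := by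
    apply traj_pos h (by norm_num) (by norm_num) (le_refl _)
    · rw [hroot]; linarith
    · exact hpos34
  have hpos : ∀ t ∈ Icc (0:ℝ) (3/4), 0 < u t := by
    intro t ht
    rcases le_total t (1/4) with hc | hc
    · exact hpos14 t ⟨ht.1, hc⟩
    · exact hpos1434 t ⟨hc, ht.2⟩
  -- upper bound < 50
  have hble : b ≤ 36*a + 0.63 := rf_b_le h hroot ha hmem
  have hup : ∀ t ∈ Icc (0:ℝ) (3/4), u t ≤ 49 := by
    intro t ht
    have h1 := rf_u_upper h ht.1 ht.2
    have h2 : t * b ≤ (3/4) * b := mul_le_mul_of_nonneg_right ht.2 hmem.1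
    have := ha.2
    nlinarith
  -- assemble
  refine ⟨u, v, fun t => -(t^2 * G (u t)), h.2.2.2.2.1, h.2.2.2.2.2, ?_, ?_, ?_, h34, ?_⟩
  · exact (((continuous_pow 2).mul (G_cont.comp h.1)).neg).continuousOn
  · intro t ht
    have htm : t ∈ Icc (0:ℝ) (3/4) := ⟨ht.1.le, ht.2.le⟩
    have hG : G (u t) = (u t)^2 * Real.log (1 + u t) :=
      G_eq (u t) (hpos t htm).le (le_trans (hup t htm) (by norm_num))
    show -(t^2 * G (u t)) + t ^ 2 * u t ^ 2 * Real.log (1 + u t) = 0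
    linear_combination (-(t^2)) * hG
  · rw [hu0, hroot]
    ring
  · intro t ht
    exact hpos t ⟨ht.1.le, ht.2.le⟩

end
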